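/- Let G ≤ Aut(T_d) be a self-similar subgroup that is i₀-persistent, where i₀ is the largest letter of the alphabet X. If the triples (L₋, σ, (g_1, …, g_n), L₊) and (L₋', σ', (g'_1, …, g'_{n'}), L₊') represent the same element of the Röver–Nekrashevych group V_d(G), with the leaves of L₊ and of L₊' listed in ascending lexicographic order, then g_n = g'_{n'}; that is, the group elements attached to the lexicographically largest leaves of L₊ and L₊' coincide. -/

import Mathlib

namespace RoverNekrashevych

variable {X : Type*}

/-- The state (section) of `f` at the word `u`. -/
def state (f : List X → List X) (u : List X) : List X → List X :=
  fun w => (f (u ++ w)).drop u.length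

/-- `f` is an automorphism of the infinite rooted tree with vertex set `List X`. -/
def IsTreeAut (f : Equiv.Perm (List X)) : Prop :=
  f [] = [] ∧ ∀ (u : List X) (x : X), ∃ y : X, f (u ++ [x]) = f u ++ [y]

/-- `G` consists of tree automorphisms. -/
def IsTreeAutGroup (G : Subgroup (Equiv.Perm (List X))) : Prop :=
  ∀ f ∈ G, IsTreeAut f

/-- `G` is self-similar: all states of elements of `G` are realized by elements of `G`. -/
def SelfSimilar (G : Subgroup (Equiv.Perm (List X))) : Prop :=
  ∀ f ∈ G, ∀ u : List X, ∃ g ∈ G, ⇑g = state (⇑f) u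

/-- A function is finite-state if it has only finitely many states. -/
def FiniteStateFun (f : List X → List X) : Prop :=
  Set.Finite {g : List X → List X | ∃ u : List X, g = state f u}

/-- `G` is finite-state if all its elements are. -/
def FiniteStateGroup (G : Subgroup (Equiv.Perm (List X))) : Prop :=
  ∀ f ∈ G, FiniteStateFun ⇑f

/-- `G` is `i`-persistent: the state of every element at `[i]` is the element itself. -/
def Persistent (G : Subgroup (Equiv.Perm (List X))) (i : X) : Prop :=
  ∀ f ∈ G, state (⇑f) [i] = ⇑f

/-- `G` is coarsely diagonal: for `f ∈ G`, each state `f_u` is realized by some `g ∈ G`,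
and `g⁻¹ * f` has finite order. -/
def CoarselyDiagonal (G : Subgroup (Equiv.Perm (List X))) : Prop :=
  ∀ f ∈ G, ∀ u : List X, ∃ g ∈ G, ⇑g = state (⇑f) u ∧ IsOfFinOrder (g⁻¹ * f)

/-- The length-`n` prefix of a boundary point `p : ℕ → X`. -/
def prefixFn (p : ℕ → X) (n : ℕ) : List X :=
  List.ofFn fun i : Fin n => p i

/-- The homeomorphism of the boundary `ℕ → X` induced by a tree automorphism:
for every `n`, the length-`n` prefix of `boundary f p` is the `f`-image of the
length-`n` prefix of `p`. -/
def boundary (f : List X → List X) (p : ℕ → X) : ℕ → X :=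
  fun n => (f (prefixFn p (n + 1))).getD n (p n)

/-- Concatenation `u·p` of a finite word and a boundary point. -/
def catWord (u : List X) (p : ℕ → X) : ℕ → X :=
  fun n => if h : n < u.length then u.get ⟨n, h⟩ else p (n - u.length)

/-- A leaf set: a finite set of words such that every boundary point has exactly one
prefix in the set. -/
def IsLeafSet (L : Set (List X)) : Prop :=
  L.Finite ∧ ∀ p : ℕ → X, ∃! u : List X, u ∈ L ∧ prefixFn p u.length = u

variable [LinearOrder X]

-- basic prefixFn lemmas
lemma prefixFn_zero (p : ℕ → X) : prefixFn p 0 = [] := by simp [prefixFn]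

lemma prefixFn_succ (p : ℕ → X) (n : ℕ) :
    prefixFn p (n + 1) = prefixFn p n ++ [p n] := by
  simp only [prefixFn, List.ofFn_succ', List.concat_eq_append, Fin.coe_castSucc,
    Fin.val_last]

lemma length_prefixFn (p : ℕ → X) (n : ℕ) : (prefixFn p n).length = n := by
  simp [prefixFn]

lemma point_ext {q q' : ℕ → X} (h : ∀ m, prefixFn q m = prefixFn q' m) : q = q' := by
  funext n
  have h1 := h (n + 1)
  rw [prefixFn_succ, prefixFn_succ, h n] at h1
  simpa using h1

lemma prefixFn_catWord (a : List X) (p : ℕ → X) (m : ℕ) :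
    prefixFn (catWord a p) m = a.take m ++ prefixFn p (m - a.length) := by
  apply List.ext_getElem
  · simp [length_prefixFn, List.length_take]; omega
  · intro i h1 h2
    rw [length_prefixFn] at h1
    simp only [prefixFn, List.getElem_ofFn, catWord]
    by_cases hi : i < a.length
    · rw [dif_pos hi, List.getElem_append_left (by simp [List.length_take]; omega)]
      simp
    · rw [dif_neg hi]
      rw [List.getElem_append_right (by simp [List.length_take]; omega)]
      simp only [List.getElem_ofFn]
      congr 1
      simp [List.length_take]
      omega

lemma lengthTA (f : Equiv.Perm (List X)) (hf : IsTreeAut f) (w : List X) :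
    (f w).length = w.length := by
  induction w using List.reverseRecOn with
  | nil => simp [hf.1]
  | append_singleton u x ih =>
    obtain ⟨y, hy⟩ := hf.2 u x
    simp [hy, ih]

lemma apply_append (f : Equiv.Perm (List X)) (hf : IsTreeAut f) (u w : List X) :
    f (u ++ w) = f u ++ state (⇑f) u w := by
  have htake : (f (u ++ w)).take u.length = f u := by
    induction w using List.reverseRecOn with
    | nil =>
      rw [List.append_nil]
      conv_lhs => rw [show u.length = (f u).length from (lengthTA f hf u).symm]
      exact List.take_length
    | append_singleton w x ih =>
      obtain ⟨y, hy⟩ := hf.2 (u ++ w) x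
      rw [← List.append_assoc, hy,
        List.take_append_of_le_length (by rw [lengthTA f hf]; simp), ih]
  calc f (u ++ w) = (f (u ++ w)).take u.length ++ (f (u ++ w)).drop u.length :=
        (List.take_append_drop _ _).symm
    _ = f u ++ state (⇑f) u w := by rw [htake]; rfl

lemma prefixFn_boundary (f : Equiv.Perm (List X)) (hf : IsTreeAut f) (p : ℕ → X) (m : ℕ) :
    prefixFn (boundary (⇑f) p) m = f (prefixFn p m) := by
  induction m with
  | zero => rw [prefixFn_zero, prefixFn_zero, hf.1]
  | succ m ih =>
    obtain ⟨y, hy⟩ := hf.2 (prefixFn p m) (p m)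
    have hb : boundary (⇑f) p m = y := by
      have hlen : (f (prefixFn p m)).length = m := by
        rw [lengthTA f hf, length_prefixFn]
      unfold boundary
      rw [prefixFn_succ, hy, List.getD_append_right _ _ _ _ (le_of_eq hlen), hlen,
        Nat.sub_self]
      rfl
    rw [prefixFn_succ, ih, prefixFn_succ, hy, hb]

lemma cons_top (f : Equiv.Perm (List X)) (hf : IsTreeAut f) (i₀ : X)
    (hp : state (⇑f) [i₀] = ⇑f) :
    ∃ y : X, ∀ w : List X, f (i₀ :: w) = y :: f w := by
  have h1 : (f [i₀]).length = 1 := by rw [lengthTA f hf]; rfl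
  obtain ⟨y, hy⟩ : ∃ y, f [i₀] = [y] := by
    match h : f [i₀] with
    | [y] => exact ⟨y, rfl⟩
    | [] => rw [h] at h1; simp at h1
    | a :: b :: l => rw [h] at h1; simp at h1
  refine ⟨y, fun w => ?_⟩
  have := apply_append f hf [i₀] w
  rw [hp, hy] at this
  simpa using this

lemma rep_cons (f : Equiv.Perm (List X)) (i₀ y : X)
    (hy : ∀ w : List X, f (i₀ :: w) = y :: f w) (s : ℕ) (w : List X) :
    f (List.replicate s i₀ ++ w) = List.replicate s y ++ f w := by
  induction s with
  | zero => simp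
  | succ s ih => simp [List.replicate_succ, hy, ih]

lemma boundary_shift (f : Equiv.Perm (List X)) (hf : IsTreeAut f) (i₀ y : X)
    (hy : ∀ w : List X, f (i₀ :: w) = y :: f w) (s : ℕ) (p : ℕ → X) :
    boundary (⇑f) (catWord (List.replicate s i₀) p)
      = catWord (List.replicate s y) (boundary (⇑f) p) := by
  apply point_ext
  intro m
  rw [prefixFn_boundary f hf, prefixFn_catWord, prefixFn_catWord,
    prefixFn_boundary f hf, List.take_replicate, List.take_replicate,
    List.length_replicate, List.length_replicate, rep_cons f i₀ y hy]

lemma boundary_single (f : Equiv.Perm (List X)) (hf : IsTreeAut f) (p : ℕ → X) :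
    [boundary (⇑f) p 0] = f [p 0] := by
  have := prefixFn_boundary f hf p 1
  rw [prefixFn_succ, prefixFn_zero, prefixFn_succ, prefixFn_zero] at this
  simpa using this

lemma catWord_append (a b : List X) (p : ℕ → X) :
    catWord (a ++ b) p = catWord a (catWord b p) := by
  apply point_ext
  intro m
  rw [prefixFn_catWord, prefixFn_catWord, prefixFn_catWord,
    List.take_append, List.append_assoc, List.length_append, Nat.sub_sub]

section Compare

variable [Fintype X]

lemma compare_len (hd : 2 ≤ Fintype.card X) (f f' : Equiv.Perm (List X))
    (hf : IsTreeAut f) (hf' : IsTreeAut f') (A B : List X)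
    (hE : ∀ p : ℕ → X, catWord A (boundary (⇑f) p) = catWord B (boundary (⇑f') p)) :
    B.length ≤ A.length := by
  by_contra hlen
  push_neg at hlen
  obtain ⟨x₁, x₂, hx⟩ := Fintype.exists_pair_of_one_lt_card (α := X) (by omega)
  have key : ∀ x : X, boundary (⇑f) (fun _ => x) 0 = B[A.length]'hlen := by
    intro x
    have := congrFun (hE (fun _ => x)) A.length
    unfold catWord at this
    rw [dif_neg (lt_irrefl _), dif_pos hlen, Nat.sub_self] at this
    simpa using this
  have h12 : boundary (⇑f) (fun _ => x₁) 0 = boundary (⇑f) (fun _ => x₂) 0 :=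
    (key x₁).trans (key x₂).symm
  have hfx : f [x₁] = f [x₂] := by
    rw [← boundary_single f hf (fun _ => x₁), ← boundary_single f hf (fun _ => x₂), h12]
  exact hx (by simpa using f.injective hfx)

lemma compare (hd : 2 ≤ Fintype.card X) (f f' : Equiv.Perm (List X))
    (hf : IsTreeAut f) (hf' : IsTreeAut f') (A B : List X)
    (hE : ∀ p : ℕ → X, catWord A (boundary (⇑f) p) = catWord B (boundary (⇑f') p)) :
    f = f' := by
  have hlen : A.length = B.length :=
    le_antisymm (compare_len hd f' f hf' hf B A (fun p => (hE p).symm))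
      (compare_len hd f f' hf hf' A B hE)
  have hx₀ : Nonempty X := by
    rcases Fintype.exists_pair_of_one_lt_card (α := X) (by omega) with ⟨a, _, _⟩
    exact ⟨a⟩
  obtain ⟨x₀⟩ := hx₀
  have hbd : ∀ p : ℕ → X, boundary (⇑f) p = boundary (⇑f') p := by
    intro p
    funext t
    have := congrFun (hE p) (A.length + t)
    unfold catWord at this
    have h2 : A.length + t - B.length = t := by omega
    rw [dif_neg (by omega), dif_neg (by omega), Nat.add_sub_cancel_left, h2] at this
    exact this
  apply Equiv.ext
  intro w
  set p := catWord w (fun _ => x₀) with hp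
  have hpre : prefixFn p (w.length) = w := by
    rw [prefixFn_catWord, Nat.sub_self, prefixFn_zero, List.take_length, List.append_nil]
  calc f w = f (prefixFn p w.length) := by rw [hpre]
    _ = prefixFn (boundary (⇑f) p) w.length := (prefixFn_boundary f hf p _).symm
    _ = prefixFn (boundary (⇑f') p) w.length := by rw [hbd]
    _ = f' (prefixFn p w.length) := prefixFn_boundary f' hf' p _
    _ = f' w := by rw [hpre]

end Compare

-- ordered lemmas
lemma rep_lt_prefix (i₀ : X) (htop : ∀ x : X, x ≤ i₀) :
    ∀ (k : ℕ) (w : List X), List.replicate k i₀ < w → List.replicate k i₀ <+: w := by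
  intro k
  induction k with
  | zero => intro w _; simp
  | succ k ih =>
    intro w h
    rw [List.replicate_succ] at h ⊢
    have h' : List.Lex (· < ·) (i₀ :: List.replicate k i₀) w := h
    cases h' with
    | cons htail => exact List.cons_prefix_cons.mpr ⟨rfl, ih _ htail⟩
    | rel hr => exact absurd hr (not_lt.2 (htop _))

lemma leaf_antichain {L : Set (List X)} (hL : IsLeafSet L) (x₀ : X) {a b : List X}
    (ha : a ∈ L) (hb : b ∈ L) (hab : a <+: b) : a = b := by
  obtain ⟨w, _, huniq⟩ := hL.2 (catWord b (fun _ => x₀))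
  have hb' : prefixFn (catWord b fun _ => x₀) b.length = b := by
    rw [prefixFn_catWord, Nat.sub_self, prefixFn_zero, List.take_length, List.append_nil]
  have ha' : prefixFn (catWord b fun _ => x₀) a.length = a := by
    rw [prefixFn_catWord, Nat.sub_eq_zero_of_le hab.length_le, prefixFn_zero,
      List.append_nil]
    exact (List.prefix_iff_eq_take.mp hab).symm
  rw [huniq a ⟨ha, ha'⟩, huniq b ⟨hb, hb'⟩]

lemma last_leaf (i₀ : X) (htop : ∀ x : X, x ≤ i₀) {n : ℕ} (hn : 0 < n)
    (v : Fin n → List X) (hmono : StrictMono v) (hleaf : IsLeafSet (Set.range v)) :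
    ∃ k, v ⟨n - 1, by omega⟩ = List.replicate k i₀ := by
  obtain ⟨w, ⟨⟨j, hj⟩, hw⟩, _⟩ := hleaf.2 (fun _ => i₀)
  have hconst : ∀ m : ℕ, prefixFn (fun _ : ℕ => i₀) m = List.replicate m i₀ := by
    intro m; simp [prefixFn, List.ofFn_const]
  have hwrep : w = List.replicate w.length i₀ := by
    conv_lhs => rw [← hw, hconst]
  have hmax : ∀ i, v i ≤ w := by
    intro i
    by_contra hlt
    push_neg at hlt
    have hpre : w <+: v i := by
      rw [hwrep] at hlt ⊢
      exact rep_lt_prefix i₀ htop _ _ hlt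
    exact absurd (leaf_antichain hleaf i₀ ⟨j, hj⟩ ⟨i, rfl⟩ hpre).symm (ne_of_lt hlt).symm
  have hle : j ≤ (⟨n - 1, by omega⟩ : Fin n) := by
    rw [Fin.le_def]
    have := j.isLt
    simp
    omega
  have h1 : w ≤ v ⟨n - 1, by omega⟩ := by
    rw [← hj]; exact hmono.monotone hle
  exact ⟨w.length, (le_antisymm (hmax _) h1).trans hwrep⟩



/-- The triple `(L₋, σ, (g_1,…,g_n), L₊)`, with the leaves of `L₋` and `L₊` listed by the
strictly increasing (in the lexicographic order) enumerations `u` and `v`, represents the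
homeomorphism `h` of the boundary: `h (vᵢ·p) = u_{σ i}·(ĝᵢ p)` for all `i` and `p`. -/
def Represents (G : Subgroup (Equiv.Perm (List X))) (h : (ℕ → X) → ℕ → X)
    (n : ℕ) (u v : Fin n → List X) (σ : Equiv.Perm (Fin n))
    (g : Fin n → Equiv.Perm (List X)) : Prop :=
  StrictMono u ∧ StrictMono v ∧ IsLeafSet (Set.range u) ∧ IsLeafSet (Set.range v) ∧
  (∀ i, g i ∈ G) ∧
  ∀ (i : Fin n) (p : ℕ → X), h (catWord (v i) p) = catWord (u (σ i)) (boundary (⇑(g i)) p)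

/-- The underlying set of the Röver–Nekrashevych group `V_d(G)`: all self-bijections of the
boundary represented by some triple. -/
def RNSet (G : Subgroup (Equiv.Perm (List X))) : Set (Equiv.Perm (ℕ → X)) :=
  {h | ∃ (n : ℕ) (u v : Fin n → List X) (σ : Equiv.Perm (Fin n))
      (g : Fin n → Equiv.Perm (List X)), Represents G (⇑h) n u v σ g}


/-- Let `G ≤ Aut(T_d)` be self-similar and `i₀`-persistent, where `i₀` is
the largest letter of the alphabet.  If two triples represent the same element of the
Röver–Nekrashevych group `V_d(G)`, with leaves listed in ascending lexicographic order, then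
the group elements attached to the lexicographically largest leaves coincide. -/
theorem state_at_last_leaf_well_defined [Fintype X] (hd : 2 ≤ Fintype.card X)
    (i₀ : X) (htop : ∀ x : X, x ≤ i₀)
    (G : Subgroup (Equiv.Perm (List X))) (hG : IsTreeAutGroup G)
    (hss : SelfSimilar G) (hpers : Persistent G i₀)
    (h : (ℕ → X) → ℕ → X)
    (n n' : ℕ) (hn : 0 < n) (hn' : 0 < n')
    (u v : Fin n → List X) (σ : Equiv.Perm (Fin n)) (g : Fin n → Equiv.Perm (List X))
    (u' v' : Fin n' → List X) (σ' : Equiv.Perm (Fin n')) (g' : Fin n' → Equiv.Perm (List X))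
    (hrep : Represents G h n u v σ g) (hrep' : Represents G h n' u' v' σ' g') :
    g ⟨n - 1, by omega⟩ = g' ⟨n' - 1, by omega⟩ := by
  obtain ⟨hu, hv, hLu, hLv, hgG, hH⟩ := hrep
  obtain ⟨hu', hv', hLu', hLv', hgG', hH'⟩ := hrep'
  set ℓ : Fin n := ⟨n - 1, by omega⟩ with hℓ
  set ℓ' : Fin n' := ⟨n' - 1, by omega⟩ with hℓ'
  have hfG := hgG ℓ
  have hf'G := hgG' ℓ'
  have hf : IsTreeAut (g ℓ) := hG _ hfG
  have hf' : IsTreeAut (g' ℓ') := hG _ hf'G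
  obtain ⟨k, hk⟩ := last_leaf i₀ htop hn v hv hLv
  obtain ⟨k', hk'⟩ := last_leaf i₀ htop hn' v' hv' hLv'
  obtain ⟨y, hy⟩ := cons_top (g ℓ) hf i₀ (hpers _ hfG)
  obtain ⟨y', hy'⟩ := cons_top (g' ℓ') hf' i₀ (hpers _ hf'G)
  set m := max k k' with hm
  have e1 : ∀ p, h (catWord (List.replicate m i₀) p)
      = catWord (u (σ ℓ) ++ List.replicate (m - k) y) (boundary (⇑(g ℓ)) p) := by
    intro p
    have hsplit : List.replicate m i₀
        = List.replicate k i₀ ++ List.replicate (m - k) i₀ := by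
      rw [← List.replicate_add]; congr 1; omega
    rw [hsplit, catWord_append, ← hk, hH ℓ, boundary_shift (g ℓ) hf i₀ y hy,
      catWord_append]
  have e2 : ∀ p, h (catWord (List.replicate m i₀) p)
      = catWord (u' (σ' ℓ') ++ List.replicate (m - k') y') (boundary (⇑(g' ℓ')) p) := by
    intro p
    have hsplit : List.replicate m i₀
        = List.replicate k' i₀ ++ List.replicate (m - k') i₀ := by
      rw [← List.replicate_add]; congr 1; omega
    rw [hsplit, catWord_append, ← hk', hH' ℓ', boundary_shift (g' ℓ') hf' i₀ y' hy',
      catWord_append]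
  exact compare hd _ _ hf hf' _ _ (fun p => (e1 p).symm.trans (e2 p))

end RoverNekrashevych
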